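/- (i) If τ(−λ) = τ(λ) and a(−λ) = a(λ) for all λ ∈ ℂ∖{0}, then C_{i,j}(−λ) = C_{i,j}(λ) for all i, j ∈ {0,…,p−1} and all λ. (ii) If τ(1/λ) = τ(λ) for all λ ∈ ℂ∖{0}, then C_{0,0}(1/λ) = C_{0,0}(λ) and C_{0,1}(1/λ) = C_{0,p−1}(λ) for all λ at which both sides are defined. -/

import Mathlib

noncomputable def Dmat (p : ℕ) (q : ℂ) (tau a : ℂ → ℂ) (lam : ℂ) :
    Matrix (ZMod p) (ZMod p) ℂ :=
  Matrix.of fun k l : ZMod p =>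
    if l = k then tau (q ^ k.val * lam)
    else if l = k - 1 then -a (q ^ k.val * lam)
    else if l = k + 1 then -a ((q ^ k.val * lam)⁻¹)
    else 0

def delIdx {p : ℕ} (i : Fin p) (m : Fin (p - 1)) : Fin p :=
  if h : m.val < i.val then ⟨m.val, Nat.lt_trans h i.isLt⟩
  else ⟨m.val + 1, by have h1 := m.isLt; have h2 := i.isLt; omega⟩

noncomputable def DmatFin (p : ℕ) (q : ℂ) (tau a : ℂ → ℂ) (lam : ℂ) :
    Matrix (Fin p) (Fin p) ℂ :=
  (Dmat p q tau a lam).submatrix (fun r : Fin p => (r.val : ZMod p))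
    (fun s : Fin p => (s.val : ZMod p))

noncomputable def cofactor (p : ℕ) (q : ℂ) (tau a : ℂ → ℂ) (i j : Fin p) (lam : ℂ) : ℂ :=
  (-1 : ℂ) ^ (i.val + j.val) *
    ((DmatFin p q tau a lam).submatrix (delIdx i) (delIdx j)).det

section
variable {p : ℕ} {q : ℂ} {tau a : ℂ → ℂ}

lemma pow_val_neg_mul (hq : IsPrimitiveRoot q p) (hp : p ≠ 0) (k : ZMod p) :
    q ^ k.val * q ^ (-k).val = 1 := by
  haveI : NeZero p := ⟨hp⟩
  rw [← pow_add, hq.pow_eq_one_iff_dvd, ← ZMod.natCast_eq_zero_iff]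
  push_cast
  simp [ZMod.natCast_val, ZMod.cast_id]

lemma Dmat_neg (hq : IsPrimitiveRoot q p) (hp3 : 3 ≤ p)
    (htau : ∀ lam : ℂ, lam ≠ 0 → tau (-lam) = tau lam)
    (ha : ∀ lam : ℂ, lam ≠ 0 → a (-lam) = a lam)
    {lam : ℂ} (hlam : lam ≠ 0) :
    Dmat p q tau a (-lam) = Dmat p q tau a lam := by
  have hqne : q ≠ 0 := hq.ne_zero (by omega)
  ext k l
  have hx : q ^ k.val * lam ≠ 0 := mul_ne_zero (pow_ne_zero _ hqne) hlam
  simp only [Dmat, Matrix.of_apply, mul_neg, inv_neg, htau _ hx, ha _ hx,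
    ha _ (inv_ne_zero hx)]

lemma Dmat_inv (hq : IsPrimitiveRoot q p) (hp3 : 3 ≤ p)
    (htau : ∀ lam : ℂ, lam ≠ 0 → tau lam⁻¹ = tau lam)
    {lam : ℂ} (hlam : lam ≠ 0) :
    Dmat p q tau a lam⁻¹ =
      (Dmat p q tau a lam).submatrix (fun k => -k) (fun k => -k) := by
  have hp : p ≠ 0 := by omega
  haveI : NeZero p := ⟨hp⟩
  have hqne : q ≠ 0 := hq.ne_zero hp
  have h1 : (1 : ZMod p) ≠ 0 := by
    intro h
    rw [show ((1 : ZMod p)) = ((1 : ℕ) : ZMod p) by norm_num,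
      ZMod.natCast_eq_zero_iff] at h
    have := Nat.le_of_dvd one_pos h; omega
  have h2 : (2 : ZMod p) ≠ 0 := by
    intro h
    rw [show ((2 : ZMod p)) = ((2 : ℕ) : ZMod p) by norm_num,
      ZMod.natCast_eq_zero_iff] at h
    have := Nat.le_of_dvd two_pos h; omega
  ext k l
  have hk1 : k - 1 ≠ k := fun h => h1 (by linear_combination -h)
  have hk2 : k + 1 ≠ k := fun h => h1 (by linear_combination h)
  have hk3 : k + 1 ≠ k - 1 := fun h => h2 (by linear_combination h)
  simp only [Dmat, Matrix.submatrix_apply, Matrix.of_apply]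
  rw [show -k - 1 = -(k + 1) from by ring, show -k + 1 = -(k - 1) from by ring]
  simp only [neg_inj]
  have hs : q ^ k.val * q ^ (-k).val = 1 := pow_val_neg_mul hq hp k
  set t := q ^ k.val with ht
  set s := q ^ (-k).val with hsdef
  have hsne : s ≠ 0 := pow_ne_zero _ hqne
  have hts : t = s⁻¹ := eq_inv_of_mul_eq_one_left hs
  have hst : s = t⁻¹ := eq_inv_of_mul_eq_one_right hs
  have hinv : t * lam⁻¹ = (s * lam)⁻¹ := by rw [mul_inv, ← hts]
  have hinv2 : (t * lam⁻¹)⁻¹ = s * lam := by rw [mul_inv, inv_inv, ← hst]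
  have v1 : tau (t * lam⁻¹) = tau (s * lam) := by
    rw [hinv]; exact htau _ (mul_ne_zero hsne hlam)
  by_cases e1 : l = k
  · subst e1; rw [if_pos rfl, if_pos rfl, v1]
  · by_cases e2 : l = k - 1
    · subst e2
      rw [if_neg hk1, if_pos rfl, if_neg hk1, if_neg (fun h => hk3 h.symm),
        if_pos rfl, hinv]
    · by_cases e3 : l = k + 1
      · subst e3
        rw [if_neg hk2, if_neg hk3, if_pos rfl, if_neg hk2, if_pos rfl, hinv2]
      · rw [if_neg e1, if_neg e2, if_neg e3, if_neg e1, if_neg e3, if_neg e2]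

end

/-- (i) If `τ` and `a` are even then all cofactors of `D_τ` are even:
`C_{i,j}(−λ) = C_{i,j}(λ)`. (ii) If `τ(1/λ) = τ(λ)` then `C_{0,0}(1/λ) = C_{0,0}(λ)`
and `C_{0,1}(1/λ) = C_{0,p−1}(λ)`. -/
theorem stmt_4 (p : ℕ) (hodd : Odd p) (hp3 : 3 ≤ p)
    (q : ℂ) (hq : IsPrimitiveRoot q p)
    (tau a : ℂ → ℂ) :
    ((∀ lam : ℂ, lam ≠ 0 → tau (-lam) = tau lam) →
      (∀ lam : ℂ, lam ≠ 0 → a (-lam) = a lam) →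
      ∀ (i j : Fin p) (lam : ℂ), lam ≠ 0 →
        cofactor p q tau a i j (-lam) = cofactor p q tau a i j lam) ∧
    ((∀ lam : ℂ, lam ≠ 0 → tau lam⁻¹ = tau lam) →
      ∀ lam : ℂ, lam ≠ 0 →
        cofactor p q tau a ⟨0, by omega⟩ ⟨0, by omega⟩ lam⁻¹ =
          cofactor p q tau a ⟨0, by omega⟩ ⟨0, by omega⟩ lam ∧
        cofactor p q tau a ⟨0, by omega⟩ ⟨1, by omega⟩ lam⁻¹ =
          cofactor p q tau a ⟨0, by omega⟩ ⟨p - 1, by omega⟩ lam) := by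
  constructor
  · intro htau ha i j lam hlam
    unfold cofactor DmatFin
    rw [Dmat_neg hq hp3 htau ha hlam]
  · intro htau lam hlam
    obtain ⟨n, rfl⟩ : ∃ n, p = n + 2 := ⟨p - 2, by omega⟩
    have hn1 : 1 ≤ n := by omega
    have hnodd : Odd n := by
      rcases hodd with ⟨t, ht⟩; exact ⟨t - 1, by omega⟩
    haveI : NeZero (n + 2) := ⟨by omega⟩
    have hD := Dmat_inv (a := a) hq hp3 htau hlam
    set i0 : Fin (n + 2) := ⟨0, by omega⟩ with hi0
    set i1 : Fin (n + 2) := ⟨1, by omega⟩ with hi1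
    set ip : Fin (n + 2) := ⟨n + 2 - 1, by omega⟩ with hip
    have hF : ∀ m : Fin (n + 1),
        (((delIdx i0 m).val : ℕ) : ZMod (n + 2)) = ((m.val + 1 : ℕ) : ZMod (n + 2)) := by
      intro m; simp only [hi0, delIdx, dif_neg (Nat.not_lt_zero _)]
    have hG1 : ∀ m : Fin (n + 1), (((delIdx i1 m).val : ℕ) : ZMod (n + 2)) =
        if m.val = 0 then 0 else ((m.val + 1 : ℕ) : ZMod (n + 2)) := by
      intro m
      simp only [hi1, delIdx]
      split_ifs with h h1 h2
      · simp [h1]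
      · omega
      · omega
      · rfl
    have hGp : ∀ m : Fin (n + 1),
        (((delIdx ip m).val : ℕ) : ZMod (n + 2)) = ((m.val : ℕ) : ZMod (n + 2)) := by
      intro m; simp only [hip, delIdx, dif_pos (show m.val < n + 2 - 1 from m.isLt)]
    have hsum : ∀ x y : ℕ, x + y = n + 2 →
        -((x : ℕ) : ZMod (n + 2)) = ((y : ℕ) : ZMod (n + 2)) := by
      intro x y hxy
      apply neg_eq_of_add_eq_zero_left
      rw [← Nat.cast_add, show y + x = n + 2 from by omega, ZMod.natCast_self]
    have hFrev : ∀ m : Fin (n + 1),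
        -(((delIdx i0 m).val : ℕ) : ZMod (n + 2)) =
          (((delIdx i0 (Fin.rev m)).val : ℕ) : ZMod (n + 2)) := by
      intro m
      rw [hF, hF, Fin.val_rev]
      exact hsum _ _ (by have := m.isLt; omega)
    have hG1rev : ∀ m : Fin (n + 1),
        -(((delIdx i1 m).val : ℕ) : ZMod (n + 2)) =
          (((delIdx ip (finRotate (n + 1) (Fin.rev m))).val : ℕ) : ZMod (n + 2)) := by
      intro m
      rw [hG1, hGp, coe_finRotate]
      by_cases h0 : m.val = 0
      · rw [if_pos h0, if_pos (by ext; simp [Fin.val_rev, h0])]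
        simp
      · rw [if_neg h0, if_neg (by
          intro h
          have := congrArg Fin.val h
          simp [Fin.val_rev, Fin.val_last] at this
          omega)]
        rw [Fin.val_rev]
        exact hsum _ _ (by have := m.isLt; omega)
    have M0 : ((DmatFin (n+2) q tau a lam⁻¹).submatrix (delIdx i0) (delIdx i0) :
          Matrix (Fin (n+1)) (Fin (n+1)) ℂ)
        = (((DmatFin (n+2) q tau a lam).submatrix (delIdx i0) (delIdx i0) :
            Matrix (Fin (n+1)) (Fin (n+1)) ℂ)).submatrix
            ⇑(Fin.revPerm : Equiv.Perm (Fin (n+1))) ⇑(Fin.revPerm : Equiv.Perm (Fin (n+1))) := by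
      ext m m'
      simp only [Matrix.submatrix_apply, DmatFin, hD]
      show Dmat (n+2) q tau a lam (-(((delIdx i0 m).val : ℕ) : ZMod (n+2)))
          (-(((delIdx i0 m').val : ℕ) : ZMod (n+2))) = _
      rw [hFrev m, hFrev m']
      rfl
    have M1 : ((DmatFin (n+2) q tau a lam⁻¹).submatrix (delIdx i0) (delIdx i1) :
          Matrix (Fin (n+1)) (Fin (n+1)) ℂ)
        = (((DmatFin (n+2) q tau a lam).submatrix (delIdx i0) (delIdx ip) :
            Matrix (Fin (n+1)) (Fin (n+1)) ℂ)).submatrix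
            ⇑(Fin.revPerm : Equiv.Perm (Fin (n+1)))
            ⇑((Fin.revPerm : Equiv.Perm (Fin (n+1))).trans (finRotate (n+1))) := by
      ext m m'
      simp only [Matrix.submatrix_apply, DmatFin, hD]
      show Dmat (n+2) q tau a lam (-(((delIdx i0 m).val : ℕ) : ZMod (n+2)))
          (-(((delIdx i1 m').val : ℕ) : ZMod (n+2))) = _
      rw [hFrev m, hG1rev m']
      rfl
    constructor
    · unfold cofactor
      show (-1:ℂ) ^ (0 + 0) *
          ((DmatFin (n+2) q tau a lam⁻¹).submatrix (delIdx i0) (delIdx i0) :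
            Matrix (Fin (n+1)) (Fin (n+1)) ℂ).det
        = (-1:ℂ) ^ (0 + 0) *
          ((DmatFin (n+2) q tau a lam).submatrix (delIdx i0) (delIdx i0) :
            Matrix (Fin (n+1)) (Fin (n+1)) ℂ).det
      rw [M0]
      rw [Matrix.det_submatrix_equiv_self]
    · unfold cofactor
      show (-1:ℂ) ^ (0 + 1) *
          ((DmatFin (n+2) q tau a lam⁻¹).submatrix (delIdx i0) (delIdx i1) :
            Matrix (Fin (n+1)) (Fin (n+1)) ℂ).det
        = (-1:ℂ) ^ (0 + (n+1)) *
          ((DmatFin (n+2) q tau a lam).submatrix (delIdx i0) (delIdx ip) :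
            Matrix (Fin (n+1)) (Fin (n+1)) ℂ).det
      rw [M1]
      have e1 : (((DmatFin (n+2) q tau a lam).submatrix (delIdx i0) (delIdx ip) :
            Matrix (Fin (n+1)) (Fin (n+1)) ℂ)).submatrix
            ⇑(Fin.revPerm : Equiv.Perm (Fin (n+1)))
            ⇑((Fin.revPerm : Equiv.Perm (Fin (n+1))).trans (finRotate (n+1)))
          = ((((DmatFin (n+2) q tau a lam).submatrix (delIdx i0) (delIdx ip) :
            Matrix (Fin (n+1)) (Fin (n+1)) ℂ)).submatrix id
            ⇑((Fin.revPerm : Equiv.Perm (Fin (n+1))).trans (finRotate (n+1)))).submatrix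
            ⇑(Fin.revPerm : Equiv.Perm (Fin (n+1))) id := rfl
      rw [e1, Matrix.det_permute, Matrix.det_permute']
      have hsign : (Equiv.Perm.sign (Fin.revPerm : Equiv.Perm (Fin (n+1)))) *
          (Equiv.Perm.sign ((Fin.revPerm : Equiv.Perm (Fin (n+1))).trans (finRotate (n+1)))) = -1 := by
        have ht : (Fin.revPerm : Equiv.Perm (Fin (n+1))).trans (finRotate (n+1))
            = (finRotate (n+1)) * (Fin.revPerm : Equiv.Perm (Fin (n+1))) := rfl
        rw [ht, map_mul, mul_comm (Equiv.Perm.sign (finRotate (n+1))), ← mul_assoc,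
          Int.units_mul_self, one_mul, sign_finRotate, Nat.add_sub_cancel, Odd.neg_one_pow hnodd]
      have hcast : ((Equiv.Perm.sign (Fin.revPerm : Equiv.Perm (Fin (n+1))) : ℤ) : ℂ) *
          ((Equiv.Perm.sign ((Fin.revPerm : Equiv.Perm (Fin (n+1))).trans (finRotate (n+1))) : ℤ) : ℂ)
          = -1 := by
        rw [← Int.cast_mul, ← Units.val_mul, hsign]; norm_num
      rw [show ((-1:ℂ)) ^ (0 + 1) = -1 by norm_num,
        show ((-1:ℂ)) ^ (0 + (n+1)) = 1 from by
          rw [Nat.zero_add]; exact Even.neg_one_pow (Odd.add_one hnodd), one_mul]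
      linear_combination (-(((DmatFin (n+2) q tau a lam).submatrix (delIdx i0) (delIdx ip) :
          Matrix (Fin (n+1)) (Fin (n+1)) ℂ)).det) * hcast
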